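/- Let A be an n×n symmetric nonnegative matrix of rank 2. Among all 2×2 nonsingular principal submatrices, choose Ã = A[{i₁,i₂}] minimizing ‖Ã⁻¹‖₁, and let H be zero except H[{i₁,i₂},{i₁,i₂}] = Ã⁻¹. Then for every symmetric G with AGA = A, ‖H‖₁ ≤ ‖G‖₁. -/

import Mathlib

open Matrix

lemma inv2 (x y z e : ℝ) (he : e = x*z - y*y) (hne : e ≠ 0) :
    (!![x,y;y,z])⁻¹ = !![z/e, -y/e; -y/e, x/e] := by
  subst he
  have h2 : x*z - y^2 ≠ 0 := by rw [sq]; exact hne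
  have h3 : -y^2 + x*z ≠ 0 := by rw [sq]; intro h; exact hne (by linarith)
  apply Matrix.inv_eq_right_inv
  ext k l
  fin_cases k <;> fin_cases l <;>
    simp [Matrix.mul_apply, Fin.sum_univ_two, Matrix.one_apply] <;>
    field_simp <;> ring

lemma sumabs2 (x y z e : ℝ) (hx : 0 ≤ x) (hy : 0 ≤ y) (hz : 0 ≤ z)
    (he : e = x*z - y*y) (hne : e ≠ 0) :
    ∑ k, ∑ l, |(!![x,y;y,z])⁻¹ k l| = (x + 2*y + z)/|e| := by
  rw [inv2 x y z e he hne]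
  have h0 : (0:ℝ) < |e| := abs_pos.2 hne
  simp [Fin.sum_univ_two, abs_div]
  rw [abs_of_nonneg hx, abs_of_nonneg hy, abs_of_nonneg hz]
  field_simp
  ring

lemma key1 (a b c α β : ℝ) (ha : 0 ≤ a) (hb : 0 ≤ b) (hc : 0 ≤ c)
    (hd : a*c - b*b ≠ 0)
    (hN1 : 0 ≤ α*a + β*b) (hN2 : 0 ≤ α*b + β*c)
    (hM2 : α ≠ 0 → α^2*(a+2*b+c) ≤ (α^2*a + 2*α*β*b + β^2*c) + 2*(α*b+β*c) + c)
    (hM1 : β ≠ 0 → β^2*(a+2*b+c) ≤ (α^2*a + 2*α*β*b + β^2*c) + 2*(α*a+β*b) + a) :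
    α - β ≤ 1 := by
  by_contra hcon
  push_neg at hcon
  rcases lt_trichotomy α 0 with hα | hα | hα
  · have hβ : β < -1 := by linarith
    have h1 : α*a ≤ 0 := mul_nonpos_of_nonpos_of_nonneg (le_of_lt hα) ha
    have h2 : β*b ≤ 0 := mul_nonpos_of_nonpos_of_nonneg (by linarith) hb
    have ha0 : a = 0 := by nlinarith
    have hb0 : b = 0 := by nlinarith
    apply hd; rw [ha0, hb0]; ring
  · subst hα
    have hβ : β < -1 := by linarith
    have hb0 : b = 0 := by nlinarith
    have hc0 : c ≤ 0 := by nlinarith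
    apply hd
    have : c = 0 := le_antisymm hc0 hc
    rw [hb0, this]; ring
  · have hM2' := hM2 (ne_of_gt hα)
    have hbr : c*(α+β+1) + 2*b*α ≤ 0 := by nlinarith [sq_nonneg α, sq_nonneg β]
    rcases eq_or_lt_of_le hb with hb0 | hbpos
    · have hapos : a*c ≠ 0 := by rw [← hb0] at hd; simpa using hd
      have hcpos : 0 < c := lt_of_le_of_ne hc (by rintro rfl; simp at hapos)
      have hβ0 : 0 ≤ β := by nlinarith
      nlinarith
    · have h1 : c*(α+β+1) < 0 := by nlinarith
      have hcpos : 0 < c := by nlinarith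
      have hs : α + β + 1 < 0 := by nlinarith
      have hβ : β < 0 := by linarith
      have hM1' := hM1 (ne_of_lt hβ)
      have h2 : a*(α+β+1) + 2*b*β ≥ 0 := by nlinarith
      nlinarith [mul_nonpos_of_nonneg_of_nonpos ha (le_of_lt hs)]

lemma colspan {n : ℕ} (A : Matrix (Fin n) (Fin n) ℝ) (hrank : A.rank = 2)
    (i₁ i₂ : Fin n) (hd : A i₁ i₁ * A i₂ i₂ - A i₁ i₂ * A i₂ i₁ ≠ 0) :
    ∀ p, ∃ x y : ℝ, ∀ q, A q p = x * A q i₁ + y * A q i₂ := by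
  intro p
  set c₁ : Fin n → ℝ := fun q => A q i₁ with hc₁
  set c₂ : Fin n → ℝ := fun q => A q i₂ with hc₂
  have hmem : ∀ j, (fun q => A q j) ∈ LinearMap.range A.mulVecLin := by
    intro j
    exact ⟨Pi.single j 1, by ext q; simp [Matrix.mulVecLin, Matrix.mulVec_single]⟩
  have hli : LinearIndependent ℝ ![c₁, c₂] := by
    rw [LinearIndependent.pair_iff]
    intro s t hst
    have h1 := congrFun hst i₁
    have h2 := congrFun hst i₂
    simp [hc₁, hc₂] at h1 h2
    have hs0 : s * (A i₁ i₁ * A i₂ i₂ - A i₁ i₂ * A i₂ i₁) = 0 := by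
      linear_combination A i₂ i₂ * h1 - A i₁ i₂ * h2
    have ht0 : t * (A i₁ i₁ * A i₂ i₂ - A i₁ i₂ * A i₂ i₁) = 0 := by
      linear_combination A i₁ i₁ * h2 - A i₂ i₁ * h1
    exact ⟨(mul_eq_zero.1 hs0).resolve_right hd, (mul_eq_zero.1 ht0).resolve_right hd⟩
  set W : Submodule ℝ (Fin n → ℝ) := Submodule.span ℝ {c₁, c₂} with hW
  have hWle : W ≤ LinearMap.range A.mulVecLin := by
    rw [hW, Submodule.span_le]
    rintro x (rfl | rfl)
    · exact hmem i₁
    · exact hmem i₂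
  have hrange : ({c₁, c₂} : Set (Fin n → ℝ)) = Set.range ![c₁, c₂] := by
    ext x; simp [Matrix.range_cons]; tauto
  have hfinW : Module.finrank ℝ W = 2 := by
    rw [hW, hrange, finrank_span_eq_card hli]
    simp
  have hEq : W = LinearMap.range A.mulVecLin := by
    apply Submodule.eq_of_le_of_finrank_le hWle
    rw [hfinW]
    rw [Matrix.rank] at hrank
    omega
  have hcolp : (fun q => A q p) ∈ W := hEq ▸ hmem p
  rw [hW, Submodule.mem_span_pair] at hcolp
  obtain ⟨x, y, hxy⟩ := hcolp
  refine ⟨x, y, fun q => ?_⟩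
  have := congrFun hxy q
  simpa [hc₁, hc₂, eq_comm] using this

set_option maxHeartbeats 1000000 in
theorem rank_two_nonneg_symmetric_min_norm {n : ℕ}
    (A : Matrix (Fin n) (Fin n) ℝ) (hsym : Aᵀ = A)
    (hnonneg : ∀ i j, 0 ≤ A i j) (hrank : A.rank = 2)
    (i₁ i₂ : Fin n) (hne : i₁ ≠ i₂)
    (hdet : (A.submatrix ![i₁, i₂] ![i₁, i₂]).det ≠ 0)
    (hmin : ∀ j₁ j₂ : Fin n, j₁ ≠ j₂ →
      (A.submatrix ![j₁, j₂] ![j₁, j₂]).det ≠ 0 →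
      ∑ k, ∑ l, |(A.submatrix ![i₁, i₂] ![i₁, i₂])⁻¹ k l| ≤
        ∑ k, ∑ l, |(A.submatrix ![j₁, j₂] ![j₁, j₂])⁻¹ k l|)
    (H : Matrix (Fin n) (Fin n) ℝ)
    (hHblock : ∀ k l : Fin 2,
      H (![i₁, i₂] k) (![i₁, i₂] l) = (A.submatrix ![i₁, i₂] ![i₁, i₂])⁻¹ k l)
    (hHzero : ∀ i j : Fin n, (i ∉ ({i₁, i₂} : Set (Fin n)) ∨ j ∉ ({i₁, i₂} : Set (Fin n))) →
      H i j = 0) :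
    ∀ G : Matrix (Fin n) (Fin n) ℝ, Gᵀ = G → A * G * A = A →
      ∑ i, ∑ j, |H i j| ≤ ∑ i, ∑ j, |G i j| := by
  intro G hGsym hGinv
  have hs : ∀ p q, A p q = A q p := fun p q => by
    nth_rewrite 2 [← hsym]; rw [Matrix.transpose_apply]
  -- abbreviations
  set a := A i₁ i₁ with ha_def
  set b := A i₁ i₂ with hb_def
  set c := A i₂ i₂ with hc_def
  set d := a*c - b*b with hd_def
  have ha : 0 ≤ a := hnonneg i₁ i₁
  have hb : 0 ≤ b := hnonneg i₁ i₂
  have hc : 0 ≤ c := hnonneg i₂ i₂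
  have hba : A i₂ i₁ = b := hs i₂ i₁
  have hSub : A.submatrix ![i₁, i₂] ![i₁, i₂] = !![a, b; b, c] := by
    ext k l
    fin_cases k <;> fin_cases l <;> simp [ha_def, hb_def, hc_def, hba]
  have hd : d ≠ 0 := by
    rw [hSub, Matrix.det_fin_two_of] at hdet
    rw [hd_def]; exact fun h => hdet (by linarith [h])
  have habsd : (0:ℝ) < |d| := abs_pos.2 hd
  -- coefficient functions
  set u : Fin n → ℝ := fun p => (A p i₁ * c - A p i₂ * b) / d with hu_def
  set v : Fin n → ℝ := fun p => (A p i₂ * a - A p i₁ * b) / d with hv_def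
  have hid1 : ∀ p, u p * a + v p * b = A p i₁ := by
    intro p
    simp only [hu_def, hv_def]
    field_simp
    rw [hd_def]; ring
  have hid2 : ∀ p, u p * b + v p * c = A p i₂ := by
    intro p
    simp only [hu_def, hv_def]
    field_simp
    rw [hd_def]; ring
  -- rank-2: diagonal identity
  have hApp : ∀ p, A p p = u p * A p i₁ + v p * A p i₂ := by
    intro p
    obtain ⟨x, y, hxy⟩ := colspan A hrank i₁ i₂ (by rw [hba, ← hd_def]; exact hd) p
    have e1 : A p i₁ = x * a + y * b := by
      have := hxy i₁; rw [hs i₁ p] at this; rw [this, ← ha_def, ← hb_def]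
    have e2 : A p i₂ = x * b + y * c := by
      have := hxy i₂; rw [hs i₂ p] at this; rw [this, hba, ← hc_def]
    have hx : x = u p := by
      simp only [hu_def]
      rw [e1, e2]
      field_simp
      rw [hd_def]; ring
    have hy : y = v p := by
      simp only [hv_def]
      rw [e1, e2]
      field_simp
      rw [hd_def]; ring
    rw [← hx, ← hy]
    exact hxy p
  -- the minimality consequences
  have hsumA : ∑ k, ∑ l, |(A.submatrix ![i₁, i₂] ![i₁, i₂])⁻¹ k l| = (a + 2*b + c)/|d| := by
    rw [hSub]
    exact sumabs2 a b c d ha hb hc hd_def hd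
  have hM1 : ∀ p, v p ≠ 0 →
      (v p)^2*(a+2*b+c) ≤ ((u p)^2*a + 2*(u p)*(v p)*b + (v p)^2*c) + 2*((u p)*a+(v p)*b) + a := by
    intro p hv
    have hpne : p ≠ i₁ := by
      rintro rfl
      apply hv
      simp only [hv_def]
      rw [← hb_def, ← ha_def]
      field_simp; ring
    have hDsub : A.submatrix ![p, i₁] ![p, i₁] = !![A p p, A p i₁; A p i₁, a] := by
      ext k l
      fin_cases k <;> fin_cases l <;> simp [ha_def, hs i₁ p]
    have hdet1 : (v p)^2 * d = A p p * a - A p i₁ * A p i₁ := by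
      rw [hApp p, ← hid1 p, ← hid2 p, hd_def]; ring
    have hdetne : (A.submatrix ![p, i₁] ![p, i₁]).det ≠ 0 := by
      rw [hDsub, Matrix.det_fin_two_of, ← hdet1]
      exact mul_ne_zero (pow_ne_zero 2 hv) hd
    have hm := hmin p i₁ hpne hdetne
    rw [hsumA, hDsub,
      sumabs2 (A p p) (A p i₁) a ((v p)^2 * d) (hnonneg p p) (hnonneg p i₁) ha hdet1 
        (mul_ne_zero (pow_ne_zero 2 hv) hd)] at hm
    rw [abs_mul, abs_pow, sq_abs] at hm
    have hv2 : (0:ℝ) < (v p)^2 := by positivity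
    rw [div_le_div_iff₀ habsd (by positivity)] at hm
    have key : (v p)^2*(a+2*b+c) ≤ A p p + 2 * A p i₁ + a := by
      nlinarith [hm, habsd]
    calc (v p)^2*(a+2*b+c) ≤ A p p + 2 * A p i₁ + a := key
      _ = ((u p)^2*a + 2*(u p)*(v p)*b + (v p)^2*c) + 2*((u p)*a+(v p)*b) + a := by
          rw [hApp p, ← hid1 p, ← hid2 p]; ring
  have hM2 : ∀ p, u p ≠ 0 →
      (u p)^2*(a+2*b+c) ≤ ((u p)^2*a + 2*(u p)*(v p)*b + (v p)^2*c) + 2*((u p)*b+(v p)*c) + c := by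
    intro p hu
    have hpne : p ≠ i₂ := by
      rintro rfl
      apply hu
      simp only [hu_def]
      rw [← hba, ← hc_def]
      field_simp; ring
    have hDsub : A.submatrix ![p, i₂] ![p, i₂] = !![A p p, A p i₂; A p i₂, c] := by
      ext k l
      fin_cases k <;> fin_cases l <;> simp [hc_def, hs i₂ p]
    have hdet1 : (u p)^2 * d = A p p * c - A p i₂ * A p i₂ := by
      rw [hApp p, ← hid1 p, ← hid2 p, hd_def]; ring
    have hdetne : (A.submatrix ![p, i₂] ![p, i₂]).det ≠ 0 := by
      rw [hDsub, Matrix.det_fin_two_of, ← hdet1]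
      exact mul_ne_zero (pow_ne_zero 2 hu) hd
    have hm := hmin p i₂ hpne hdetne
    rw [hsumA, hDsub,
      sumabs2 (A p p) (A p i₂) c ((u p)^2 * d) (hnonneg p p) (hnonneg p i₂) hc hdet1
        (mul_ne_zero (pow_ne_zero 2 hu) hd)] at hm
    rw [abs_mul, abs_pow, sq_abs] at hm
    rw [div_le_div_iff₀ habsd (by positivity)] at hm
    have key : (u p)^2*(a+2*b+c) ≤ A p p + 2 * A p i₂ + c := by
      nlinarith [hm, habsd]
    calc (u p)^2*(a+2*b+c) ≤ A p p + 2 * A p i₂ + c := key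
      _ = ((u p)^2*a + 2*(u p)*(v p)*b + (v p)^2*c) + 2*((u p)*b+(v p)*c) + c := by
          rw [hApp p, ← hid1 p, ← hid2 p]; ring
  -- the bound |u p - v p| ≤ 1
  have hN1 : ∀ p, 0 ≤ u p * a + v p * b := fun p => (hid1 p).symm ▸ hnonneg p i₁
  have hN2 : ∀ p, 0 ≤ u p * b + v p * c := fun p => (hid2 p).symm ▸ hnonneg p i₂
  have hrb : ∀ p, |u p - v p| ≤ 1 := by
    intro p
    rw [abs_le]
    constructor
    · have := key1 c b a (v p) (u p) hc hb ha
        (by rw [hd_def] at hd; intro h; exact hd (by linear_combination h))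
        (by have := hN2 p; linarith [this])
        (by have := hN1 p; linarith [this])
        (fun h => by have h2 := hM1 p h; ring_nf at h2 ⊢; linarith)
        (fun h => by have h2 := hM2 p h; ring_nf at h2 ⊢; linarith)
      linarith
    · exact key1 a b c (u p) (v p) ha hb hc (hd_def ▸ hd) (hN1 p) (hN2 p)
        (fun h => by have h2 := hM2 p h; linarith)
        (fun h => by have h2 := hM1 p h; linarith)
  -- the r function and the trace identity
  set r : Fin n → ℝ := fun p => u p - v p with hr_def
  set lam : ℝ := (c + b)/d with hlam_def
  set mu : ℝ := -((a + b)/d) with hmu_def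
  have hrlin : ∀ p, r p = lam * A p i₁ + mu * A p i₂ := by
    intro p
    simp only [hr_def, hlam_def, hmu_def, hu_def, hv_def]
    field_simp
    ring
  have hS : ∀ x y, (∑ p, ∑ q, A p x * G p q * A q y) = A x y := by
    intro x y
    have h1 : (∑ p, ∑ q, A p x * G p q * A q y) = ∑ q, (∑ p, A x p * G p q) * A q y := by
      rw [Finset.sum_comm]
      refine Finset.sum_congr rfl fun q _ => ?_
      rw [Finset.sum_mul]
      refine Finset.sum_congr rfl fun p _ => ?_
      rw [hs p x]
    rw [h1]
    have h2 : ∑ q, (∑ p, A x p * G p q) * A q y = (A * G * A) x y := by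
      rw [Matrix.mul_apply]
      refine Finset.sum_congr rfl fun q _ => ?_
      rw [Matrix.mul_apply]
    rw [h2, hGinv]
  have hT : ∑ p, ∑ q, r p * G p q * r q = (a + 2*b + c)/d := by
    have step1 : ∑ p, ∑ q, r p * G p q * r q =
        lam*lam*(∑ p, ∑ q, A p i₁ * G p q * A q i₁) +
        lam*mu*(∑ p, ∑ q, A p i₁ * G p q * A q i₂) +
        (mu*lam*(∑ p, ∑ q, A p i₂ * G p q * A q i₁) +
        mu*mu*(∑ p, ∑ q, A p i₂ * G p q * A q i₂)) := by
      simp only [Finset.mul_sum]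
      rw [← Finset.sum_add_distrib, ← Finset.sum_add_distrib, ← Finset.sum_add_distrib]
      refine Finset.sum_congr rfl fun p _ => ?_
      rw [← Finset.sum_add_distrib, ← Finset.sum_add_distrib, ← Finset.sum_add_distrib]
      refine Finset.sum_congr rfl fun q _ => ?_
      rw [hrlin p, hrlin q]; ring
    rw [step1, hS i₁ i₁, hS i₁ i₂, hS i₂ i₁, hS i₂ i₂, hba,
      ← ha_def, ← hb_def, ← hc_def, hlam_def, hmu_def]
    field_simp
    rw [hd_def]; ring
  -- value of the H sum
  have hinv : (A.submatrix ![i₁, i₂] ![i₁, i₂])⁻¹ = !![c/d, -b/d; -b/d, a/d] := by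
    rw [hSub]; exact inv2 a b c d hd_def hd
  have hH11 : H i₁ i₁ = c/d := by have := hHblock 0 0; rw [hinv] at this; simpa using this
  have hH12 : H i₁ i₂ = -b/d := by have := hHblock 0 1; rw [hinv] at this; simpa using this
  have hH21 : H i₂ i₁ = -b/d := by have := hHblock 1 0; rw [hinv] at this; simpa using this
  have hH22 : H i₂ i₂ = a/d := by have := hHblock 1 1; rw [hinv] at this; simpa using this
  have hHsum : ∑ i, ∑ j, |H i j| = (a + 2*b + c)/|d| := by
    have hrow : ∀ i : Fin n, i ∈ ({i₁, i₂} : Finset (Fin n)) →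
        ∑ j, |H i j| = |H i i₁| + |H i i₂| := by
      intro i _
      have hsub : ∑ j, |H i j| = ∑ j ∈ ({i₁, i₂} : Finset (Fin n)), |H i j| := by
        symm
        apply Finset.sum_subset (Finset.subset_univ _)
        intro j _ hj
        rw [hHzero i j (Or.inr (by simpa using hj))]
        simp
      rw [hsub, Finset.sum_pair hne]
    have houter : ∑ i, ∑ j, |H i j| = ∑ i ∈ ({i₁, i₂} : Finset (Fin n)), ∑ j, |H i j| := by
      symm
      apply Finset.sum_subset (Finset.subset_univ _)
      intro i _ hi
      apply Finset.sum_eq_zero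
      intro j _
      rw [hHzero i j (Or.inl (by simpa using hi))]
      simp
    rw [houter, Finset.sum_congr rfl hrow, Finset.sum_pair hne, hH11, hH12, hH21, hH22]
    rw [abs_div, abs_div, abs_div, abs_of_nonneg ha, abs_of_nonneg hc, abs_neg, abs_of_nonneg hb]
    field_simp
    ring
  -- final chain
  rw [hHsum]
  have habsT : |∑ p, ∑ q, r p * G p q * r q| = (a + 2*b + c)/|d| := by
    rw [hT, abs_div, abs_of_nonneg (by linarith : (0:ℝ) ≤ a + 2*b + c)]
  calc (a + 2*b + c)/|d| = |∑ p, ∑ q, r p * G p q * r q| := habsT.symm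
    _ ≤ ∑ p, |∑ q, r p * G p q * r q| := Finset.abs_sum_le_sum_abs _ _
    _ ≤ ∑ p, ∑ q, |r p * G p q * r q| :=
        Finset.sum_le_sum fun p _ => Finset.abs_sum_le_sum_abs _ _
    _ ≤ ∑ i, ∑ j, |G i j| := by
        refine Finset.sum_le_sum fun p _ => Finset.sum_le_sum fun q _ => ?_
        rw [abs_mul, abs_mul]
        have h1 : |r p| ≤ 1 := hrb p
        have h2 : |r q| ≤ 1 := hrb q
        calc |r p| * |G p q| * |r q| ≤ |G p q| * |r q| :=
              mul_le_mul_of_nonneg_right (mul_le_of_le_one_left (abs_nonneg _) h1) (abs_nonneg _)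
          _ ≤ |G p q| := mul_le_of_le_one_right (abs_nonneg _) h2
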